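/- If φ*(N) divides N and p is the smallest odd prime factor of N, then p is a Fermat prime, i.e., p = 2^{2^k} + 1 for some k ≥ 0. -/

import Mathlib

/-- The unitary totient function: φ*(n) = ∏_{p^e || n} (p^e - 1). -/
def uphi (n : ℕ) : ℕ := ∏ p ∈ n.primeFactors, (p ^ n.factorization p - 1)

theorem stmt5 (N p : ℕ) (hdvd : uphi N ∣ N)
    (hp : p.Prime) (hp2 : p ≠ 2) (hpN : p ∣ N)
    (hmin : ∀ q : ℕ, q.Prime → q ≠ 2 → q ∣ N → p ≤ q) :
    ∃ k : ℕ, p = 2 ^ (2 ^ k) + 1 := by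
  have hp3 : 3 ≤ p := by
    rcases hp.two_le.lt_or_eq with h | h
    · omega
    · exact absurd h.symm hp2
  rcases eq_or_ne N 0 with rfl | hN0
  · have := hmin 3 (by norm_num) (by norm_num) (dvd_zero 3)
    exact ⟨0, by omega⟩
  -- p - 1 divides N
  have hmem : p ∈ N.primeFactors := Nat.mem_primeFactors.2 ⟨hp, hpN, hN0⟩
  have h1 : p ^ N.factorization p - 1 ∣ uphi N :=
    Finset.dvd_prod_of_mem _ hmem
  have h2 : p - 1 ∣ p ^ N.factorization p - 1 := by
    have := Nat.sub_dvd_pow_sub_pow p 1 (N.factorization p)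
    simpa using this
  have hdvdN : p - 1 ∣ N := h2.trans (h1.trans hdvd)
  -- every prime factor of p - 1 is 2
  have hodd : ∀ {d : ℕ}, d.Prime → d ∣ p - 1 → d = 2 := by
    intro d hd hdd
    by_contra hd2
    have hdN : d ∣ N := hdd.trans hdvdN
    have := hmin d hd hd2 hdN
    have hle : d ≤ p - 1 := Nat.le_of_dvd (by omega) hdd
    omega
  have hpos : p - 1 ≠ 0 := by omega
  have := Nat.eq_prime_pow_of_unique_prime_dvd hpos hodd
  set m := (p - 1).primeFactorsList.length with hm
  have hpeq : p = 2 ^ m + 1 := by omega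
  have hm0 : m ≠ 0 := by
    intro h
    rw [h] at hpeq
    omega
  have hP : (2 ^ m + 1).Prime := hpeq ▸ hp
  obtain ⟨k, hk⟩ := Nat.pow_of_pow_add_prime (by norm_num) hm0 hP
  exact ⟨k, by rw [hpeq, hk]⟩
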